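/- Suppose the vertex set V of a graph G is partitioned into clusters C_1, ..., C_p, each inducing a connected subgraph of G of diameter at most D, and suppose the 'cluster graph' G_C (with one node per cluster, two clusters adjacent iff some edge of G joins them) admits a partition of its nodes into q color classes such that each monochromatic connected component of G_C has diameter at most D' (in G_C). Then assigning each vertex of G the color of its cluster yields a partition of V into q classes such that every monochromatic connected component of G has diameter at most (D'+1)·(D+1) + D' ≤ O(D·D') in G. -/

import Mathlib

/-- The cluster graph of a graph `G` with respect to a cluster assignment
`f : V → Fin p`: clusters are adjacent iff some edge of `G` joins them. -/
def clusterGraph {V : Type*} {p : ℕ} (G : SimpleGraph V) (f : V → Fin p) :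
    SimpleGraph (Fin p) where
  Adj i j := i ≠ j ∧ ∃ x y : V, f x = i ∧ f y = j ∧ G.Adj x y
  symm := by
    constructor
    rintro i j ⟨hne, x, y, hx, hy, hxy⟩
    exact ⟨hne.symm, y, x, hy, hx, hxy.symm⟩
  loopless := by
    constructor
    rintro i ⟨hne, -⟩
    exact hne rfl

lemma proj_walk {V : Type*} {p q : ℕ} (G : SimpleGraph V) (f : V → Fin p)
    (col : Fin p → Fin q) :
    ∀ {x y : V} (w : G.Walk x y), (∀ z ∈ w.support, col (f z) = col (f x)) →
      ∃ W : (clusterGraph G f).Walk (f x) (f y), ∀ z ∈ W.support, col z = col (f x) := by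
  intro x y w
  induction w with
  | nil => intro _; exact ⟨.nil, by simp⟩
  | @cons a b c hab w ih =>
    intro hmono
    have hb : col (f b) = col (f a) := hmono b (by simp)
    have hmono' : ∀ z ∈ w.support, col (f z) = col (f b) := by
      intro z hz
      rw [hb]
      exact hmono z (by simp [hz])
    obtain ⟨W, hW⟩ := ih hmono'
    by_cases h : f a = f b
    · refine ⟨W.copy h.symm rfl, ?_⟩
      intro z hz
      rw [SimpleGraph.Walk.support_copy] at hz
      rw [hW z hz, hb]
    · refine ⟨.cons ⟨h, a, b, rfl, rfl, hab⟩ W, ?_⟩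
      intro z hz
      rcases (SimpleGraph.Walk.mem_support_iff _).1 hz with rfl | hz
      · rfl
      · rw [hW z hz, hb]

lemma lift_walk {V : Type*} {p : ℕ} (G : SimpleGraph V) (f : V → Fin p) (D : ℕ)
    (hcluster : ∀ x y : V, f x = f y →
      ∃ w : G.Walk x y, w.length ≤ D ∧ ∀ z ∈ w.support, f z = f x) :
    ∀ {i j : Fin p} (W : (clusterGraph G f).Walk i j) (x y : V),
      f x = i → f y = j → ∃ u : G.Walk x y, u.length ≤ (W.length + 1) * D + W.length := by
  intro i j W
  induction W with
  | nil =>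
    intro x y hx hy
    obtain ⟨w, hw, -⟩ := hcluster x y (hx.trans hy.symm)
    exact ⟨w, by simpa using hw⟩
  | @cons i i' j h W ih =>
    obtain ⟨-, a, b, ha, hb, hab⟩ := h
    intro x y hx hy
    obtain ⟨w1, hw1, -⟩ := hcluster x a (hx.trans ha.symm)
    obtain ⟨w2, hw2⟩ := ih b y hb hy
    refine ⟨w1.append (.cons hab w2), ?_⟩
    simp only [SimpleGraph.Walk.length_append, SimpleGraph.Walk.length_cons]
    show w1.length + (w2.length + 1) ≤ (W.length + 1 + 1) * D + (W.length + 1)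
    nlinarith [hw1, hw2]

/-- Lifting a network decomposition of the cluster graph to the original graph:
if every cluster induces a connected subgraph of diameter at most `D` and a
coloring of the cluster graph has monochromatic components of diameter at most
`D'`, then coloring each vertex by the color of its cluster yields monochromatic
components of diameter at most `(D'+1)(D+1) + D'` in `G`. -/
theorem stmt_18 {V : Type*} {p q : ℕ} (G : SimpleGraph V) (f : V → Fin p)
    (D D' : ℕ)
    (hcluster : ∀ x y : V, f x = f y →
      ∃ w : G.Walk x y, w.length ≤ D ∧ ∀ z ∈ w.support, f z = f x)
    (col : Fin p → Fin q)
    (hdecomp : ∀ i j : Fin p,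
      (∃ w : (clusterGraph G f).Walk i j, ∀ z ∈ w.support, col z = col i) →
      (clusterGraph G f).dist i j ≤ D') :
    ∀ x y : V, (∃ w : G.Walk x y, ∀ z ∈ w.support, col (f z) = col (f x)) →
      G.dist x y ≤ (D' + 1) * (D + 1) + D' := by
  intro x y ⟨w, hw⟩
  obtain ⟨W0, hW0⟩ := proj_walk G f col w hw
  have hreach : (clusterGraph G f).Reachable (f x) (f y) := ⟨W0⟩
  have hdist := hdecomp (f x) (f y) ⟨W0, hW0⟩
  obtain ⟨W, hWlen⟩ := hreach.exists_walk_length_eq_dist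
  obtain ⟨u, hu⟩ := lift_walk G f D hcluster W x y rfl rfl
  calc G.dist x y ≤ u.length := SimpleGraph.dist_le u
    _ ≤ (W.length + 1) * D + W.length := hu
    _ ≤ (D' + 1) * (D + 1) + D' := by rw [hWlen]; nlinarith
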